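/- Borel's normal number theorem: for Lebesgue-almost every x ∈ [0,1] and every digit k ∈ {0,…,m−1}, the frequency τ_k(x) = lim_{n→∞} (1/n)·#{i ≤ n : x_i = k} exists and equals 1/m, where 0.x₁x₂⋯ is the base-m expansion of x. -/

import Mathlib

open Filter MeasureTheory ProbabilityTheory Finset

/-- The `i`-th digit (`i ≥ 1`) of the base-`m` expansion of `x ∈ [0,1]`:
`x_i = ⌊m^i x⌋ mod m`. -/
noncomputable def baseDigit (m : ℕ) (x : ℝ) (i : ℕ) : ℤ :=
  ⌊x * (m : ℝ) ^ i⌋ % m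

lemma count_mod_eq (m a k : ℕ) (hm : 0 < m) (hk : k < m) :
    ((range (a * m)).filter (fun t => t % m = k)).card = a := by
  have himg : (range (a * m)).filter (fun t => t % m = k)
      = (range a).image (fun q => q * m + k) := by
    ext t
    simp only [mem_filter, mem_range, mem_image]
    constructor
    · rintro ⟨h1, h2⟩
      refine ⟨t / m, (Nat.div_lt_iff_lt_mul hm).2 h1, ?_⟩
      rw [← h2]; exact Nat.div_add_mod' t m
    · rintro ⟨q, hq, rfl⟩
      constructor
      · calc q * m + k < (q + 1) * m := by nlinarith
          _ ≤ a * m := Nat.mul_le_mul_right _ hq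
      · rw [add_comm, Nat.add_mul_mod_self_right, Nat.mod_eq_of_lt hk]
  rw [himg, Finset.card_image_of_injective _ (fun a b hab => by
    simpa using Nat.eq_of_mul_eq_mul_right hm (by omega)), Finset.card_range]

lemma count_div_mod (A B : ℕ) (hB : 0 < B) (P Q : ℕ → Prop) [DecidablePred P] [DecidablePred Q] :
    ((range (A * B)).filter (fun t => P (t / B) ∧ Q (t % B))).card
      = ((range A).filter P).card * ((range B).filter Q).card := by
  have hdiv : ∀ a b : ℕ, b < B → (a * B + b) / B = a := fun a b hb => by
    rw [add_comm, Nat.add_mul_div_right _ _ hB, Nat.div_eq_of_lt hb, zero_add]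
  have hmod : ∀ a b : ℕ, b < B → (a * B + b) % B = b := fun a b hb => by
    rw [add_comm, Nat.add_mul_mod_self_right, Nat.mod_eq_of_lt hb]
  rw [← Finset.card_product]
  apply Finset.card_bij' (fun t _ => (t / B, t % B)) (fun p _ => p.1 * B + p.2)
  · rintro t ht
    simp only [mem_filter, mem_range] at ht
    simp only [Finset.mem_product, mem_filter, mem_range]
    exact ⟨⟨(Nat.div_lt_iff_lt_mul hB).2 ht.1, ht.2.1⟩, ⟨Nat.mod_lt _ hB, ht.2.2⟩⟩
  · rintro ⟨a, b⟩ hp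
    simp only [Finset.mem_product, mem_filter, mem_range] at hp
    obtain ⟨⟨ha, hPa⟩, ⟨hb, hQb⟩⟩ := hp
    simp only [mem_filter, mem_range]
    refine ⟨?_, ?_, ?_⟩
    · calc a * B + b < (a + 1) * B := by nlinarith
        _ ≤ A * B := Nat.mul_le_mul_right _ ha
    · rw [hdiv a b hb]; exact hPa
    · rw [hmod a b hb]; exact hQb
  · intro t ht
    exact Nat.div_add_mod' t B
  · rintro ⟨a, b⟩ hp
    simp only [Finset.mem_product, mem_filter, mem_range] at hp
    simp [hdiv a b hp.2.1, hmod a b hp.2.1]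

lemma vol_floor (N : ℕ) (hN : 0 < N) (P : ℤ → Prop) [DecidablePred P] :
    volume {x : ℝ | x ∈ Set.Ico (0:ℝ) 1 ∧ P ⌊x * N⌋}
      = ((range N).filter (fun t : ℕ => P t)).card * ENNReal.ofReal (1 / N) := by
  have hN' : (0:ℝ) < N := by exact_mod_cast hN
  have hset : {x : ℝ | x ∈ Set.Ico (0:ℝ) 1 ∧ P ⌊x * N⌋}
      = ⋃ t ∈ (range N).filter (fun t : ℕ => P t),
          Set.Ico ((t : ℝ) / N) (((t : ℝ) + 1) / N) := by
    ext x
    simp only [Set.mem_iUnion, mem_filter, mem_range, Set.mem_setOf_eq, Set.mem_Ico,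
      exists_prop]
    constructor
    · rintro ⟨⟨hx0, hx1⟩, hP⟩
      have h0 : (0:ℤ) ≤ ⌊x * N⌋ := Int.floor_nonneg.2 (by positivity)
      have hlt : ⌊x * N⌋ < N := Int.floor_lt.2 (by push_cast; nlinarith)
      refine ⟨⌊x * N⌋.toNat, ⟨by omega, ?_⟩, ?_, ?_⟩
      · rwa [Int.toNat_of_nonneg h0]
      · rw [div_le_iff₀ hN']
        have : ((⌊x * N⌋.toNat : ℤ) : ℝ) ≤ x * N := by
          rw [Int.toNat_of_nonneg h0]; exact Int.floor_le _
        exact_mod_cast this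
      · rw [lt_div_iff₀ hN']
        have : x * N < ((⌊x * N⌋.toNat : ℤ) : ℝ) + 1 := by
          rw [Int.toNat_of_nonneg h0]; exact Int.lt_floor_add_one _
        exact_mod_cast this
    · rintro ⟨t, ⟨htN, hPt⟩, hx1, hx2⟩
      have hxt1 : (t : ℝ) ≤ x * N := (div_le_iff₀ hN').1 hx1
      have hxt2 : x * N < (t : ℝ) + 1 := (lt_div_iff₀ hN').1 hx2
      have hfl : ⌊x * N⌋ = (t : ℤ) := by
        rw [Int.floor_eq_iff]
        constructor <;> push_cast
        · exact hxt1
        · exact hxt2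
      refine ⟨⟨?_, ?_⟩, ?_⟩
      · have : (0:ℝ) ≤ (t:ℝ)/N := by positivity
        linarith
      · have htN' : (t:ℝ) + 1 ≤ N := by exact_mod_cast Nat.succ_le_of_lt htN
        calc x < ((t:ℝ)+1)/N := hx2
          _ ≤ (N:ℝ) / N := by gcongr
          _ = 1 := div_self (ne_of_gt hN')
      · rw [hfl]; exact hPt
  rw [hset]
  rw [measure_biUnion_finset ?disj (fun t _ => measurableSet_Ico)]
  · rw [Finset.sum_congr rfl (fun t _ => ?_), Finset.sum_const, nsmul_eq_mul]
    rw [Real.volume_Ico]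
    congr 1
    ring_nf
  case disj =>
    intro a ha b hb hab
    simp only [Function.onFun]
    rw [Set.Ico_disjoint_Ico]
    rcases hab.lt_or_gt with h | h
    · refine min_le_of_left_le (le_max_of_le_right ?_)
      have : ((a:ℝ)+1) ≤ b := by exact_mod_cast h
      gcongr
    · refine min_le_of_right_le (le_max_of_le_left ?_)
      have : ((b:ℝ)+1) ≤ a := by exact_mod_cast h
      gcongr

lemma floor_div_nat_real (a : ℝ) (q : ℕ) (hq : 0 < q) : ⌊a / q⌋ = ⌊a⌋ / q := by
  have hq' : (0:ℤ) < (q:ℤ) := by exact_mod_cast hq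
  have hqR : (0:ℝ) < (q:ℝ) := by exact_mod_cast hq
  apply le_antisymm
  · rw [Int.le_ediv_iff_mul_le hq', Int.le_floor]
    push_cast
    rw [← le_div_iff₀ hqR]
    exact Int.floor_le _
  · rw [Int.le_floor]
    rw [le_div_iff₀ hqR]
    have h1 : (⌊a⌋ / (q:ℤ)) * q ≤ ⌊a⌋ := Int.ediv_mul_le _ (ne_of_gt hq')
    calc ((⌊a⌋ / (q:ℤ) : ℤ) : ℝ) * q = (((⌊a⌋ / (q:ℤ)) * q : ℤ) : ℝ) := by push_cast; ring
      _ ≤ (⌊a⌋ : ℝ) := by exact_mod_cast h1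
      _ ≤ a := Int.floor_le a

lemma measurableSet_floorP (c : ℝ) (P : ℤ → Prop) : MeasurableSet {x : ℝ | P ⌊x * c⌋} := by
  have h : Measurable fun x : ℝ => ⌊x * c⌋ := (measurable_id.mul_const c).floor
  exact h MeasurableSet.of_discrete

lemma vol_inter_Icc_eq_Ico (S : Set ℝ) :
    volume (S ∩ Set.Icc (0:ℝ) 1) = volume (S ∩ Set.Ico (0:ℝ) 1) := by
  apply le_antisymm
  · have hsub : S ∩ Set.Icc 0 1 ⊆ (S ∩ Set.Ico 0 1) ∪ {1} := by
      rintro x ⟨hS, hx0, hx1⟩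
      rcases lt_or_eq_of_le hx1 with h | h
      · exact Or.inl ⟨hS, hx0, h⟩
      · exact Or.inr (by simpa using h)
    calc volume (S ∩ Set.Icc 0 1) ≤ volume ((S ∩ Set.Ico 0 1) ∪ {1}) := measure_mono hsub
      _ ≤ volume (S ∩ Set.Ico 0 1) + volume {1} := measure_union_le _ _
      _ = volume (S ∩ Set.Ico 0 1) := by rw [Real.volume_singleton, add_zero]
  · exact measure_mono (Set.inter_subset_inter_right _ Set.Ico_subset_Icc_self)

-- restricted measure of a "digit event described by ⌊x * m^e⌋"

lemma vol_restrict_floor (m e : ℕ) (hm : 1 < m) (he : 0 < e) (P : ℤ → Prop) [DecidablePred P] :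
    volume.restrict (Set.Icc (0:ℝ) 1) {x : ℝ | P ⌊x * (m:ℝ)^e⌋}
      = ((range (m^e)).filter (fun t : ℕ => P t)).card * ENNReal.ofReal (1 / (m^e : ℕ)) := by
  have hNpos : 0 < m ^ e := Nat.pow_pos (by omega)
  have hcast : ∀ x : ℝ, x * (((m^e : ℕ)) : ℝ) = x * (m:ℝ)^e := by
    intro x; push_cast; ring
  have hmeas : MeasurableSet {x : ℝ | P ⌊x * (m:ℝ)^e⌋} := measurableSet_floorP _ _
  rw [Measure.restrict_apply hmeas, vol_inter_Icc_eq_Ico]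
  have hset : {x : ℝ | P ⌊x * (m:ℝ)^e⌋} ∩ Set.Ico 0 1
      = {x : ℝ | x ∈ Set.Ico (0:ℝ) 1 ∧ P ⌊x * ((m^e : ℕ) : ℝ)⌋} := by
    ext x
    simp only [Set.mem_inter_iff, Set.mem_setOf_eq, hcast]
    tauto
  rw [hset, vol_floor _ hNpos]

lemma measure_digit (m k : ℕ) (hm : 1 < m) (hk : k < m) (d : ℕ) (hd : 1 ≤ d) :
    volume.restrict (Set.Icc (0:ℝ) 1) {x : ℝ | baseDigit m x d = (k:ℤ)}
      = ENNReal.ofReal (1 / m) := by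
  obtain ⟨d', rfl⟩ : ∃ d', d = d' + 1 := ⟨d - 1, by omega⟩
  have hmR : (0:ℝ) < m := by exact_mod_cast (by omega : 0 < m)
  have h := vol_restrict_floor m (d'+1) hm (by omega) (fun n => n % m = (k:ℤ))
  simp only [baseDigit] at h ⊢
  rw [h]
  have hiff : ∀ t : ℕ, ((t:ℤ) % m = (k:ℤ)) ↔ (t % m = k) := by
    intro t
    rw [← Int.natCast_mod, Nat.cast_inj]
  have hcount : ((range (m^(d'+1))).filter (fun t : ℕ => (t:ℤ) % m = (k:ℤ))).card
      = m ^ d' := by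
    rw [Finset.filter_congr (fun t _ => hiff t), pow_succ,
      count_mod_eq m (m^d') k (by omega) hk]
  rw [hcount]
  rw [show ((m^d' : ℕ) : ENNReal) = ENNReal.ofReal ((m^d' : ℕ) : ℝ) from (ENNReal.ofReal_natCast _).symm]
  rw [← ENNReal.ofReal_mul (by positivity)]
  congr 1
  push_cast
  rw [pow_succ]
  field_simp

lemma measure_digit_pair (m k : ℕ) (hm : 1 < m) (hk : k < m) (d q : ℕ)
    (hd : 1 ≤ d) (hq : 1 ≤ q) :
    volume.restrict (Set.Icc (0:ℝ) 1)
      ({x : ℝ | baseDigit m x d = (k:ℤ)} ∩ {x : ℝ | baseDigit m x (d+q) = (k:ℤ)})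
      = ENNReal.ofReal (1 / m) * ENNReal.ofReal (1 / m) := by
  obtain ⟨d', rfl⟩ : ∃ d', d = d' + 1 := ⟨d - 1, by omega⟩
  obtain ⟨q', rfl⟩ : ∃ q', q = q' + 1 := ⟨q - 1, by omega⟩
  set d := d' + 1
  set q := q' + 1
  have hm0 : (m:ℝ) ≠ 0 := Nat.cast_ne_zero.2 (by omega)
  have hqpos : 0 < m ^ q := Nat.pow_pos (by omega)
  -- the key rewriting of the digit at position d through ⌊x * m^(d+q)⌋
  have hkey : ∀ x : ℝ, baseDigit m x d = ⌊x * (m:ℝ)^(d+q)⌋ / (m^q : ℕ) % m := by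
    intro x
    have hxe : x * (m:ℝ)^d = (x * (m:ℝ)^(d+q)) / ((m^q : ℕ) : ℝ) := by
      push_cast
      rw [pow_add]
      field_simp
      ring
    rw [baseDigit, hxe, floor_div_nat_real _ _ hqpos]
  have hset : {x : ℝ | baseDigit m x d = (k:ℤ)} ∩ {x : ℝ | baseDigit m x (d+q) = (k:ℤ)}
      = {x : ℝ | (fun n : ℤ => n / (m^q : ℕ) % m = (k:ℤ) ∧ n % m = (k:ℤ)) ⌊x * (m:ℝ)^(d+q)⌋} := by
    ext x
    simp only [Set.mem_inter_iff, Set.mem_setOf_eq, hkey]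
    simp only [baseDigit]
  rw [hset, vol_restrict_floor m (d+q) hm (by omega)
    (fun n : ℤ => n / (m^q : ℕ) % m = (k:ℤ) ∧ n % m = (k:ℤ))]
  have hiff : ∀ t : ℕ, t ∈ range (m^(d+q)) →
      (((t:ℤ) / (m^q : ℕ) % m = (k:ℤ) ∧ (t:ℤ) % m = (k:ℤ))
        ↔ ((fun u => u % m = k) (t / m^q) ∧ (fun u => u % m = k) (t % m^q))) := by
    intro t _
    have h1 : ((t:ℤ) / (m^q : ℕ) % m = (k:ℤ)) ↔ (t / m^q % m = k) := by
      rw [← Int.natCast_div, ← Int.natCast_mod, Nat.cast_inj]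
    have h2 : ((t:ℤ) % m = (k:ℤ)) ↔ (t % m^q % m = k) := by
      rw [Nat.mod_mod_of_dvd t (dvd_pow_self m (by omega : q ≠ 0)), ← Int.natCast_mod,
        Nat.cast_inj]
    rw [h1, h2]
  rw [Finset.filter_congr hiff]
  have hrange : m ^ (d+q) = m ^ d * m ^ q := pow_add m d q
  rw [hrange, count_div_mod (m^d) (m^q) hqpos (fun u => u % m = k) (fun u => u % m = k)]
  rw [show m^d = m^d' * m from pow_succ m d', show m^q = m^q' * m from pow_succ m q']
  rw [count_mod_eq m (m^d') k (by omega) hk, count_mod_eq m (m^q') k (by omega) hk]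
  rw [show ((m^d' * m^q' : ℕ) : ENNReal) = ENNReal.ofReal ((m^d' * m^q' : ℕ) : ℝ) from
    (ENNReal.ofReal_natCast _).symm]
  rw [← ENNReal.ofReal_mul (by positivity), ← ENNReal.ofReal_mul (by positivity)]
  congr 1
  push_cast
  field_simp

lemma indepFun_indicator_of_indepSet {Ω : Type*} {mΩ : MeasurableSpace Ω} {μ : Measure Ω}
    {s t : Set Ω} (h : IndepSet s t μ) :
    IndepFun (s.indicator fun _ => (1:ℝ)) (t.indicator fun _ => (1:ℝ)) μ := by
  classical
  rw [indepFun_iff_measure_inter_preimage_eq_mul]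
  intro u v _ _
  simp_rw [Set.indicator_const_preimage_eq_union]
  have hgen : ∀ (w : Set Ω), MeasurableSet[MeasurableSpace.generateFrom {w}]
      ((if (1:ℝ) ∈ u then w else ∅) ∪ if (0:ℝ) ∈ u then wᶜ else ∅) := by
    intro w
    have hw : MeasurableSet[MeasurableSpace.generateFrom {w}] w :=
      MeasurableSpace.measurableSet_generateFrom (Set.mem_singleton _)
    refine MeasurableSet.union (MeasurableSet.ite' (fun _ => hw) fun _ => ?_)
      (MeasurableSet.ite' (fun _ => hw.compl) fun _ => ?_)
    · exact @MeasurableSet.empty _ (MeasurableSpace.generateFrom {w})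
    · exact @MeasurableSet.empty _ (MeasurableSpace.generateFrom {w})
  have hgen' : ∀ (w : Set Ω), MeasurableSet[MeasurableSpace.generateFrom {w}]
      ((if (1:ℝ) ∈ v then w else ∅) ∪ if (0:ℝ) ∈ v then wᶜ else ∅) := by
    intro w
    have hw : MeasurableSet[MeasurableSpace.generateFrom {w}] w :=
      MeasurableSpace.measurableSet_generateFrom (Set.mem_singleton _)
    refine MeasurableSet.union (MeasurableSet.ite' (fun _ => hw) fun _ => ?_)
      (MeasurableSet.ite' (fun _ => hw.compl) fun _ => ?_)
    · exact @MeasurableSet.empty _ (MeasurableSpace.generateFrom {w})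
    · exact @MeasurableSet.empty _ (MeasurableSpace.generateFrom {w})
  exact ProbabilityTheory.IndepSet.measure_inter_eq_mul
    (ProbabilityTheory.Indep.indepSet_of_measurableSet h (hgen s) (hgen' t))

lemma identDistrib_indicator_of_measure_eq {Ω : Type*} {mΩ : MeasurableSpace Ω} {μ : Measure Ω}
    [IsProbabilityMeasure μ] {s t : Set Ω} (hs : MeasurableSet s) (ht : MeasurableSet t)
    (hst : μ s = μ t) :
    IdentDistrib (s.indicator fun _ => (1:ℝ)) (t.indicator fun _ => (1:ℝ)) μ μ := by
  classical
  have hms : Measurable (s.indicator fun _ => (1:ℝ)) := measurable_const.indicator hs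
  have hmt : Measurable (t.indicator fun _ => (1:ℝ)) := measurable_const.indicator ht
  refine ⟨hms.aemeasurable, hmt.aemeasurable, ?_⟩
  ext u hu
  rw [Measure.map_apply hms hu, Measure.map_apply hmt hu]
  rw [Set.indicator_const_preimage_eq_union, Set.indicator_const_preimage_eq_union]
  by_cases h1 : (1:ℝ) ∈ u <;> by_cases h0 : (0:ℝ) ∈ u <;>
    simp [h1, h0, hst, measure_compl hs (measure_ne_top μ s),
      measure_compl ht (measure_ne_top μ t)]

/-- **Borel's normal number theorem.**  For Lebesgue-almost every `x ∈ [0,1]` and every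
digit `k ∈ {0,…,m−1}`, the frequency of `k` among the base-`m` digits of `x` exists and
equals `1/m`. -/
theorem borel_normal_numbers (m : ℕ) (hm : 1 < m) :
    ∀ᵐ x ∂(volume.restrict (Set.Icc (0 : ℝ) 1)), ∀ k : ℕ, k < m →
      Tendsto (fun n : ℕ =>
          (((Finset.Icc 1 n).filter (fun i => baseDigit m x i = (k : ℤ))).card : ℝ) / n)
        atTop (nhds (1 / m)) := by
  classical
  haveI hprob : IsProbabilityMeasure (volume.restrict (Set.Icc (0:ℝ) 1)) := by
    constructor
    rw [Measure.restrict_apply_univ, Real.volume_Icc]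
    norm_num
  set μ := volume.restrict (Set.Icc (0:ℝ) 1) with hμ
  rw [ae_all_iff]
  intro k
  rcases Nat.lt_or_ge k m with hk | hk
  swap
  · exact ae_of_all _ fun x h => absurd h (Nat.not_lt.mpr hk)
  have hAmeas : ∀ d : ℕ, MeasurableSet {x : ℝ | baseDigit m x d = (k:ℤ)} := fun d =>
    measurableSet_floorP ((m:ℝ)^d) (fun n => n % m = (k:ℤ))
  set X : ℕ → ℝ → ℝ :=
    fun i => ({x : ℝ | baseDigit m x (i+1) = (k:ℤ)}).indicator fun _ => 1 with hX
  have hint : Integrable (X 0) μ := (integrable_const (1:ℝ)).indicator (hAmeas 1)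
  have h1m : ∀ d, 1 ≤ d → μ {x : ℝ | baseDigit m x d = (k:ℤ)} = ENNReal.ofReal (1/m) :=
    fun d hd => measure_digit m k hm hk d hd
  have hindep : Pairwise (Function.onFun (IndepFun · · μ) X) := by
    have key : ∀ i j : ℕ, i < j → IndepFun (X i) (X j) μ := by
      intro i j hij
      apply indepFun_indicator_of_indepSet
      rw [indepSet_iff_measure_inter_eq_mul (hAmeas _) (hAmeas _) μ]
      have hp := measure_digit_pair m k hm hk (i+1) (j-i) (by omega) (by omega)
      rw [show (i+1) + (j-i) = j+1 from by omega] at hp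
      rw [hp, h1m (i+1) (by omega), h1m (j+1) (by omega)]
    intro i j hij
    rcases hij.lt_or_gt with h | h
    · exact key i j h
    · exact (key j i h).symm
  have hident : ∀ i, IdentDistrib (X i) (X 0) μ μ := fun i =>
    identDistrib_indicator_of_measure_eq (hAmeas _) (hAmeas _)
      (by rw [h1m _ (by omega), h1m _ (by omega)])
  have hlln := strong_law_ae_real X hint hindep hident
  have hE : ∫ x, X 0 x ∂μ = 1 / (m:ℝ) := by
    rw [hX]
    rw [integral_indicator_const (1:ℝ) (hAmeas 1)]
    rw [measureReal_def, h1m 1 le_rfl, smul_eq_mul, mul_one, ENNReal.toReal_ofReal (by positivity)]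
  rw [hE] at hlln
  filter_upwards [hlln] with x hx _
  apply hx.congr
  intro n
  congr 1
  have hXval : ∀ i, X i x = if baseDigit m x (i+1) = (k:ℤ) then (1:ℝ) else 0 := fun i =>
    Set.indicator_apply _ _ _
  rw [Finset.sum_congr rfl fun i _ => hXval i, Finset.sum_boole]
  congr 1
  have himg : Finset.Icc 1 n = (Finset.range n).image (· + 1) := by
    ext i
    simp only [Finset.mem_Icc, Finset.mem_image, Finset.mem_range]
    constructor
    · rintro ⟨h1, h2⟩
      exact ⟨i - 1, by omega, by omega⟩
    · rintro ⟨a, ha, rfl⟩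
      omega
  rw [himg, Finset.filter_image, Finset.card_image_of_injective _ (add_left_injective 1)]
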